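/- Let Q be a subset of a Euclidean space E that is prox-regular at x̄ ∈ Q, and suppose the metric projection P_Q is C^k-smooth (k ≥ 1) on a neighborhood of x̄. Then the derivative DP_Q has constant rank on a neighborhood of x̄, and consequently Q is a C^k manifold around x̄. -/

import Mathlib

open Filter Metric Topology

variable {E : Type*} [NormedAddCommGroup E] [InnerProductSpace ℝ E] [FiniteDimensional ℝ E]

/-- The metric projection of `x` onto `Q`: the set of nearest points of `Q`. -/
def projSet (Q : Set E) (x : E) : Set E := {y | y ∈ Q ∧ dist x y = Metric.infDist x Q}

/-- `Q` is prox-regular at `x₀`: `x₀ ∈ Q`, `Q` is locally closed around `x₀`, and the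
metric projection onto `Q` is single-valued on a neighborhood of `x₀`. -/
def ProxRegularAt (Q : Set E) (x₀ : E) : Prop :=
  x₀ ∈ Q ∧ ∃ ε > (0:ℝ), IsClosed (Q ∩ Metric.closedBall x₀ ε) ∧
    ∀ x ∈ Metric.ball x₀ ε, ∃! y, y ∈ projSet Q x

/-- The proximal normal cone: nonnegative multiples of vectors `v` with `x₀ ∈ P_Q (x₀ + v)`. -/
def proxNormalCone (Q : Set E) (x₀ : E) : Set E :=
  {w | ∃ t : ℝ, ∃ v : E, 0 ≤ t ∧ x₀ ∈ projSet Q (x₀ + v) ∧ w = t • v}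

/-- `P` has directional derivative `L` at `x` in direction `v`. -/
def HasDirDeriv (P : E → E) (x v L : E) : Prop :=
  Filter.Tendsto (fun t : ℝ => t⁻¹ • (P (x + t • v) - P x)) (𝓝[>] (0:ℝ)) (𝓝 L)

/-- `M` is a `C^k` manifold around `x`: near `x`, a `C^k` local diffeomorphism of the ambient
space carries `M` onto a linear subspace. -/
def IsCkManifoldAround (k : ℕ∞) (M : Set E) (x : E) : Prop :=
  ∃ U : Set E, IsOpen U ∧ x ∈ U ∧ ∃ (φ ψ : E → E) (F : Submodule ℝ E),
    ContDiffOn ℝ k φ U ∧ ContDiffOn ℝ k ψ (φ '' U) ∧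
    (∀ y ∈ U, ψ (φ y) = y) ∧ φ '' (M ∩ U) = (F : Set E) ∩ φ '' U

lemma aux_segment_proj {Q : Set E} {z y : E} (hy : y ∈ projSet Q z) {s : ℝ}
    (h0 : 0 ≤ s) (h1 : s ≤ 1) : y ∈ projSet Q (y + s • (z - y)) := by
  obtain ⟨hyQ, hdz⟩ := hy
  set w := y + s • (z - y) with hw
  have hwy : dist w y = s * dist z y := by
    rw [dist_eq_norm, dist_eq_norm]
    simp only [hw, add_sub_cancel_left, norm_smul, Real.norm_eq_abs, abs_of_nonneg h0]
  have hzwv : z - w = (1 - s) • (z - y) := by rw [hw]; module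
  have hzw : dist z w = (1 - s) * dist z y := by
    rw [dist_eq_norm, dist_eq_norm, hzwv, norm_smul, Real.norm_eq_abs,
      abs_of_nonneg (by linarith)]
  refine ⟨hyQ, le_antisymm ?_ (Metric.infDist_le_dist_of_mem hyQ)⟩
  have h := Metric.infDist_le_infDist_add_dist (x := z) (y := w) (s := Q)
  linarith [hdz, hwy, hzw, h]

lemma aux_trace_idem {f : E →ₗ[ℝ] E} (h : f ∘ₗ f = f) :
    LinearMap.trace ℝ E f = (Module.finrank ℝ (LinearMap.range f) : ℝ) := by
  have hp : LinearMap.IsProj (LinearMap.range f) f := by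
    constructor
    · intro x; exact LinearMap.mem_range_self f x
    · rintro x ⟨u, rfl⟩; exact LinearMap.congr_fun h u
  exact hp.trace

lemma aux_nat_eq {a b : ℕ} (h : |(a : ℝ) - (b : ℝ)| < 1) : a = b := by
  have h1 := abs_lt.mp h
  have h2 : (a : ℝ) < b + 1 := by linarith [h1.2]
  have h3 : (b : ℝ) < a + 1 := by linarith [h1.1]
  have h2' : a < b + 1 := by exact_mod_cast h2
  have h3' : b < a + 1 := by exact_mod_cast h3
  omega

/-- If the projection onto a prox-regular set `Q` is `C^k` (`k ≥ 1`) near `x₀`, then its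
derivative has constant rank near `x₀`, and consequently `Q` is a `C^k` manifold around `x₀`. -/
theorem manifold_of_smooth_proj {Q : Set E} {x₀ : E}
    (hQ : ProxRegularAt Q x₀) (P : E → E) (U : Set E)
    (hU : IsOpen U) (hxU : x₀ ∈ U) (hP : ∀ x ∈ U, P x ∈ projSet Q x)
    (k : ℕ∞) (hk : 1 ≤ k) (hsm : ContDiffOn ℝ k P U) :
    (∃ V ∈ 𝓝 x₀, ∀ x ∈ V,
        LinearMap.rank ((fderiv ℝ P x : E →L[ℝ] E) : E →ₗ[ℝ] E) =
        LinearMap.rank ((fderiv ℝ P x₀ : E →L[ℝ] E) : E →ₗ[ℝ] E)) ∧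
      IsCkManifoldAround k Q x₀ := by
  obtain ⟨hx₀Q, ε, hεpos, hclosed, huniq⟩ := hQ
  have hk' : (1 : WithTop ℕ∞) ≤ (k : WithTop ℕ∞) := by exact_mod_cast hk
  -- P fixes Q on U
  have hfix : ∀ y ∈ Q, y ∈ U → P y = y := by
    intro y hyQ hyU
    have h := hP y hyU
    have h0 : Metric.infDist y Q = 0 := Metric.infDist_zero_of_mem hyQ
    have : dist y (P y) = 0 := h.2.trans h0
    exact (dist_eq_zero.mp this).symm
  have hPx₀ : P x₀ = x₀ := hfix x₀ hx₀Q hxU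
  have hPc : ContinuousOn P U := hsm.continuousOn
  have hAc : ContinuousOn (fderiv ℝ P) U := hsm.continuousOn_fderiv_of_isOpen hU hk'
  have hdiff : ∀ z ∈ U, DifferentiableAt ℝ P z := fun z hz =>
    ((hsm.differentiableOn (ne_of_gt (lt_of_lt_of_le zero_lt_one hk'))) z hz).differentiableAt (hU.mem_nhds hz)
  set A : E → (E →L[ℝ] E) := fun z => fderiv ℝ P z with hA
  -- δ₀ : ball x₀ δ₀ ⊆ U ∩ ball x₀ ε
  obtain ⟨δ₀, hδ₀pos, hδ₀⟩ : ∃ δ₀ > 0, ball x₀ δ₀ ⊆ U ∩ ball x₀ ε := by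
    have : U ∩ ball x₀ ε ∈ 𝓝 x₀ :=
      Filter.inter_mem (hU.mem_nhds hxU) (ball_mem_nhds x₀ hεpos)
    simpa using Metric.mem_nhds_iff.mp this
  have hδ₀U : ball x₀ δ₀ ⊆ U := fun z hz => (hδ₀ hz).1
  -- δ : P maps ball δ into ball δ₀, δ ≤ δ₀
  obtain ⟨δ, hδpos, hδle, hδP⟩ :
      ∃ δ > 0, δ ≤ δ₀ ∧ ∀ z ∈ ball x₀ δ, P z ∈ ball x₀ δ₀ := by
    have hc : ContinuousAt P x₀ := hPc.continuousAt (hU.mem_nhds hxU)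
    have : P ⁻¹' (ball x₀ δ₀) ∈ 𝓝 x₀ := by
      apply hc.preimage_mem_nhds
      rw [hPx₀]; exact ball_mem_nhds x₀ hδ₀pos
    obtain ⟨δ', hδ'pos, hδ'⟩ := Metric.mem_nhds_iff.mp this
    refine ⟨min δ' δ₀, lt_min hδ'pos hδ₀pos, min_le_right _ _, fun z hz => ?_⟩
    exact hδ' (lt_of_lt_of_le (mem_ball.mp hz) (min_le_left _ _))
  have hballU : ∀ {z : E}, z ∈ ball x₀ δ → z ∈ U :=
    fun hz => hδ₀U (mem_ball.mpr (lt_of_lt_of_le (mem_ball.mp hz) hδle))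
  have hballδ₀ : ∀ {z : E}, z ∈ ball x₀ δ → z ∈ ball x₀ δ₀ :=
    fun hz => mem_ball.mpr (lt_of_lt_of_le (mem_ball.mp hz) hδle)
  -- (2) P constant on segments [P z, z]
  have hseg : ∀ z ∈ ball x₀ δ, ∀ s : ℝ, 0 ≤ s → s ≤ 1 →
      P (P z + s • (z - P z)) = P z := by
    intro z hz s hs0 hs1
    set w := P z + s • (z - P z) with hwdef
    have hzδ₀ : z ∈ ball x₀ δ₀ := hballδ₀ hz
    have hPzδ₀ : P z ∈ ball x₀ δ₀ := hδP z hz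
    have hwδ₀ : w ∈ ball x₀ δ₀ := by
      have hconv := (convex_ball x₀ δ₀) hPzδ₀ hzδ₀ (by linarith : (0:ℝ) ≤ 1 - s) hs0
        (by ring : (1 - s) + s = 1)
      have : (1 - s) • P z + s • z = w := by rw [hwdef]; module
      rwa [this] at hconv
    have hwU : w ∈ U := (hδ₀ hwδ₀).1
    have hwε : w ∈ ball x₀ ε := (hδ₀ hwδ₀).2
    have h1 : P w ∈ projSet Q w := hP w hwU
    have h2 : P z ∈ projSet Q w := aux_segment_proj (hP z (hballU hz)) hs0 hs1
    obtain ⟨y, _, hyu⟩ := huniq w hwε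
    exact (hyu _ h1).trans (hyu _ h2).symm
  -- (4) P ∘ P = P on ball δ
  have hPP : ∀ z ∈ ball x₀ δ, P (P z) = P z := by
    intro z hz
    exact hfix (P z) (hP z (hballU hz)).1 (hδ₀U (hδP z hz))
  -- (3) A z (z - P z) = 0
  have hker : ∀ z ∈ ball x₀ δ, A z (z - P z) = 0 := by
    intro z hz
    set v := z - P z with hv
    have hconst : ∀ t ∈ Set.Icc (0:ℝ) 1, P (z - t • v) = P z := by
      intro t ht
      have h := hseg z hz (1 - t) (by linarith [ht.2]) (by linarith [ht.1])
      have : P z + (1 - t) • (z - P z) = z - t • v := by rw [hv]; module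
      rwa [this] at h
    have hc : HasDerivAt (fun t : ℝ => z - t • v) (-v) 0 := by
      have h1 : HasDerivAt (fun t : ℝ => t • v) v 0 := by
        simpa using (hasDerivAt_id (0:ℝ)).smul_const v
      simpa using h1.const_sub z
    have hz0 : z - (0:ℝ) • v = z := by simp
    have hd1 : HasDerivWithinAt (fun t : ℝ => P (z - t • v)) (A z (-v)) (Set.Icc 0 1) 0 := by
      have hPz : HasFDerivAt P (A z) (z - (0:ℝ) • v) := by
        rw [hz0]; exact (hdiff z (hballU hz)).hasFDerivAt
      exact (hPz.comp_hasDerivAt (0:ℝ) hc).hasDerivWithinAt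
    have hd2 : HasDerivWithinAt (fun t : ℝ => P (z - t • v)) 0 (Set.Icc 0 1) 0 := by
      apply (hasDerivWithinAt_const (0:ℝ) (Set.Icc (0:ℝ) 1) (P z)).congr hconst
      simpa using hconst 0 (Set.mem_Icc.mpr ⟨le_refl 0, zero_le_one⟩)
    have hu : UniqueDiffWithinAt ℝ (Set.Icc (0:ℝ) 1) 0 :=
      uniqueDiffOn_Icc_zero_one 0 (Set.mem_Icc.mpr ⟨le_refl 0, zero_le_one⟩)
    have heq : A z (-v) = 0 := by
      rw [← hd1.derivWithin hu, ← hd2.derivWithin hu]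
    have : A z v = 0 := by
      have := congrArg Neg.neg heq
      simpa using this
    exact this
  -- (5) chain rule: A (P z) ∘ A z = A z on ball δ
  have hcomp : ∀ z ∈ ball x₀ δ, (A (P z)).comp (A z) = A z := by
    intro z hz
    have h1 : HasFDerivAt (fun x => P (P x)) ((A (P z)).comp (A z)) z :=
      (hdiff (P z) (hδ₀U (hδP z hz))).hasFDerivAt.comp z (hdiff z (hballU hz)).hasFDerivAt
    have h2 : HasFDerivAt (fun x => P (P x)) (A z) z := by
      apply (hdiff z (hballU hz)).hasFDerivAt.congr_of_eventuallyEq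
      filter_upwards [isOpen_ball.mem_nhds hz] with w hw
      exact hPP w hw
    exact h1.unique h2
  -- idempotency at points of Q ∩ ball δ
  have hidem : ∀ y ∈ Q, y ∈ ball x₀ δ → (A y).comp (A y) = A y := by
    intro y hyQ hy
    have := hcomp y hy
    rwa [hfix y hyQ (hballU hy)] at this
  have hA0 : (A x₀).comp (A x₀) = A x₀ := hidem x₀ hx₀Q (mem_ball_self hδpos)
  set F : Submodule ℝ E := LinearMap.range ((A x₀ : E →L[ℝ] E) : E →ₗ[ℝ] E) with hF
  have hFfix : ∀ v ∈ F, A x₀ v = v := by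
    rintro _ ⟨u, rfl⟩
    exact DFunLike.congr_fun hA0 u
  set r : ℕ := Module.finrank ℝ F with hr
  -- δ₁ : ‖A z - A x₀‖ < 1/2 on ball δ₁
  obtain ⟨δ₁, hδ₁pos, hδ₁le, hδ₁⟩ :
      ∃ δ₁ > 0, δ₁ ≤ δ ∧ ∀ z ∈ ball x₀ δ₁, ‖A z - A x₀‖ < 1/2 := by
    have hc : ContinuousAt A x₀ := hAc.continuousAt (hU.mem_nhds hxU)
    have : {z | ‖A z - A x₀‖ < 1/2} ∈ 𝓝 x₀ := by
      have : ContinuousAt (fun z => ‖A z - A x₀‖) x₀ := (hc.sub continuousAt_const).norm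
      have h2 := this.preimage_mem_nhds (Iio_mem_nhds (by norm_num : ‖A x₀ - A x₀‖ < 1/2))
      exact h2
    obtain ⟨δ', hδ'pos, hδ'⟩ := Metric.mem_nhds_iff.mp this
    exact ⟨min δ' δ, lt_min hδ'pos hδpos, min_le_right _ _,
      fun z hz => hδ' (mem_ball.mpr (lt_of_lt_of_le (mem_ball.mp hz) (min_le_left _ _)))⟩
  -- injectivity of A z on F
  have hinj : ∀ z ∈ ball x₀ δ₁, ∀ v ∈ F, A z v = 0 → v = 0 := by
    intro z hz v hvF hv0
    have h1 : ‖v‖ = ‖(A x₀ - A z) v‖ := by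
      rw [ContinuousLinearMap.sub_apply, hv0, sub_zero, hFfix v hvF]
    have h2 : ‖(A x₀ - A z) v‖ ≤ ‖A x₀ - A z‖ * ‖v‖ := (A x₀ - A z).le_opNorm v
    have h3 : ‖A x₀ - A z‖ < 1/2 := by rw [norm_sub_rev]; exact hδ₁ z hz
    have h4 : ‖v‖ ≤ (1/2) * ‖v‖ := by
      calc ‖v‖ = ‖(A x₀ - A z) v‖ := h1
        _ ≤ ‖A x₀ - A z‖ * ‖v‖ := h2
        _ ≤ (1/2) * ‖v‖ := by nlinarith [norm_nonneg v]
    have : ‖v‖ = 0 := by nlinarith [norm_nonneg v]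
    exact norm_eq_zero.mp this
  -- lower bound for the rank
  have hge : ∀ z ∈ ball x₀ δ₁,
      r ≤ Module.finrank ℝ (LinearMap.range ((A z : E →L[ℝ] E) : E →ₗ[ℝ] E)) := by
    intro z hz
    set g : F →ₗ[ℝ] E := ((A z : E →L[ℝ] E) : E →ₗ[ℝ] E).comp F.subtype with hg
    have hginj : Function.Injective g := by
      intro a b hab
      have : A z ((a : E) - (b : E)) = 0 := by
        have : A z (a : E) = A z (b : E) := hab
        rw [map_sub, this, sub_self]
      have h0 := hinj z hz _ (sub_mem a.2 b.2) this
      exact Subtype.ext (sub_eq_zero.mp h0)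
    have h1 : r = Module.finrank ℝ (LinearMap.range g) :=
      (LinearMap.finrank_range_of_inj hginj).symm
    have h2 : LinearMap.range g ≤ LinearMap.range ((A z : E →L[ℝ] E) : E →ₗ[ℝ] E) :=
      LinearMap.range_comp_le_range _ _
    rw [h1]
    exact Submodule.finrank_mono h2
  -- trace of idempotents
  have htrace : ∀ y ∈ Q, y ∈ ball x₀ δ →
      LinearMap.trace ℝ E ((A y : E →L[ℝ] E) : E →ₗ[ℝ] E)
        = (Module.finrank ℝ (LinearMap.range ((A y : E →L[ℝ] E) : E →ₗ[ℝ] E)) : ℝ) := by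
    intro y hyQ hy
    apply aux_trace_idem
    rw [← ContinuousLinearMap.toLinearMap_comp, hidem y hyQ hy]
  have htr0 : LinearMap.trace ℝ E ((A x₀ : E →L[ℝ] E) : E →ₗ[ℝ] E) = (r : ℝ) :=
    htrace x₀ hx₀Q (mem_ball_self hδpos)
  -- continuity of the trace of A ∘ P at x₀
  set τ : E → ℝ := fun z => LinearMap.trace ℝ E ((A (P z) : E →L[ℝ] E) : E →ₗ[ℝ] E) with hτ
  have hτc : ContinuousAt τ x₀ := by
    have hL : Continuous fun B : E →L[ℝ] E => LinearMap.trace ℝ E (B : E →ₗ[ℝ] E) := by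
      exact LinearMap.continuous_of_finiteDimensional
        ((LinearMap.trace ℝ E).comp (ContinuousLinearMap.coeLM ℝ))
    have h1 : ContinuousAt P x₀ := hPc.continuousAt (hU.mem_nhds hxU)
    have h2 : ContinuousAt A (P x₀) := by rw [hPx₀]; exact hAc.continuousAt (hU.mem_nhds hxU)
    exact hL.continuousAt.comp (h2.comp h1)
  have hτ0 : τ x₀ = (r : ℝ) := by rw [hτ]; simp only [hPx₀]; exact htr0
  -- δ₂
  obtain ⟨δ₂, hδ₂pos, hδ₂le, hδ₂P, hδ₂τ⟩ :
      ∃ δ₂ > 0, δ₂ ≤ δ₁ ∧ (∀ z ∈ ball x₀ δ₂, P z ∈ ball x₀ δ) ∧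
        (∀ z ∈ ball x₀ δ₂, |τ z - τ x₀| < 1/2) := by
    have h1 : ContinuousAt P x₀ := hPc.continuousAt (hU.mem_nhds hxU)
    have hS1 : P ⁻¹' (ball x₀ δ) ∈ 𝓝 x₀ := by
      apply h1.preimage_mem_nhds; rw [hPx₀]; exact ball_mem_nhds x₀ hδpos
    have hS2 : {z | |τ z - τ x₀| < 1/2} ∈ 𝓝 x₀ := by
      have : ContinuousAt (fun z => |τ z - τ x₀|) x₀ := (hτc.sub continuousAt_const).abs
      have h2 := this.preimage_mem_nhds (Iio_mem_nhds (by norm_num : |τ x₀ - τ x₀| < 1/2))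
      exact h2
    obtain ⟨δ', hδ'pos, hδ'⟩ := Metric.mem_nhds_iff.mp (Filter.inter_mem hS1 hS2)
    refine ⟨min δ' δ₁, lt_min hδ'pos hδ₁pos, min_le_right _ _, ?_, ?_⟩
    · intro z hz
      exact (hδ' (mem_ball.mpr (lt_of_lt_of_le (mem_ball.mp hz) (min_le_left _ _)))).1
    · intro z hz
      exact (hδ' (mem_ball.mpr (lt_of_lt_of_le (mem_ball.mp hz) (min_le_left _ _)))).2
  have hball₂₁ : ∀ {z : E}, z ∈ ball x₀ δ₂ → z ∈ ball x₀ δ₁ :=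
    fun hz => mem_ball.mpr (lt_of_lt_of_le (mem_ball.mp hz) hδ₂le)
  have hball₂δ : ∀ {z : E}, z ∈ ball x₀ δ₂ → z ∈ ball x₀ δ :=
    fun hz => mem_ball.mpr (lt_of_lt_of_le (lt_of_lt_of_le (mem_ball.mp hz) hδ₂le) hδ₁le)
  -- constant rank on ball δ₂
  have hrank : ∀ z ∈ ball x₀ δ₂,
      Module.finrank ℝ (LinearMap.range ((A z : E →L[ℝ] E) : E →ₗ[ℝ] E)) = r := by
    intro z hz
    have hPzQ : P z ∈ Q := (hP z (hballU (hball₂δ hz))).1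
    have hPzδ : P z ∈ ball x₀ δ := hδ₂P z hz
    have hrP : Module.finrank ℝ (LinearMap.range ((A (P z) : E →L[ℝ] E) : E →ₗ[ℝ] E)) = r := by
      apply aux_nat_eq
      have h1 := hδ₂τ z hz
      rw [hτ0] at h1
      have h2 : τ z = (Module.finrank ℝ
          (LinearMap.range ((A (P z) : E →L[ℝ] E) : E →ₗ[ℝ] E)) : ℝ) := htrace _ hPzQ hPzδ
      rw [h2] at h1
      linarith [h1]
    refine le_antisymm ?_ (hge z (hball₂₁ hz))
    have h3 : LinearMap.range ((A z : E →L[ℝ] E) : E →ₗ[ℝ] E)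
        ≤ LinearMap.range ((A (P z) : E →L[ℝ] E) : E →ₗ[ℝ] E) := by
      rw [← hcomp z (hball₂δ hz), ContinuousLinearMap.toLinearMap_comp]
      exact LinearMap.range_comp_le_range _ _
    rw [← hrP]
    exact Submodule.finrank_mono h3
  have hrankC : ∀ z ∈ ball x₀ δ₂,
      LinearMap.rank ((A z : E →L[ℝ] E) : E →ₗ[ℝ] E) = (r : Cardinal) := by
    intro z hz
    have h1 : LinearMap.rank ((A z : E →L[ℝ] E) : E →ₗ[ℝ] E)
        = Module.rank ℝ (LinearMap.range ((A z : E →L[ℝ] E) : E →ₗ[ℝ] E)) := rfl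
    rw [h1, ← Submodule.finrank_eq_rank, hrank z hz]
  constructor
  · refine ⟨ball x₀ δ₂, ball_mem_nhds x₀ hδ₂pos, fun x hx => ?_⟩
    rw [hrankC x hx, hrankC x₀ (mem_ball_self hδ₂pos)]
  -- Manifold part
  set T : E →L[ℝ] E := A x₀ with hT
  set φ : E → E := fun x => T (x - x₀) + (x - P x) with hφdef
  have hφsm : ContDiffOn ℝ k φ U := by
    apply ContDiffOn.add
    · exact (T.contDiff.comp (contDiff_id.sub contDiff_const)).contDiffOn
    · exact contDiffOn_id.sub hsm
  have hφd : ∀ z ∈ U, HasFDerivAt φ ((1 : E →L[ℝ] E) - (A z - T)) z := by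
    intro z hz
    have h1 : HasFDerivAt (fun x : E => T (x - x₀)) T z := by
      have h := T.hasFDerivAt.comp z ((hasFDerivAt_id z).sub_const x₀)
      rw [ContinuousLinearMap.comp_id] at h
      exact h
    have h2 : HasFDerivAt (fun x : E => x - P x) (ContinuousLinearMap.id ℝ E - A z) z :=
      (hasFDerivAt_id z).sub (hdiff z hz).hasFDerivAt
    have h3 := h1.add h2
    have heq : T + (ContinuousLinearMap.id ℝ E - A z) = (1 : E →L[ℝ] E) - (A z - T) := by
      ext v
      simp [ContinuousLinearMap.one_def]
      abel
    rwa [heq] at h3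
  have hunit : ∀ z ∈ ball x₀ δ₁, ‖A z - T‖ < 1 :=
    fun z hz => lt_trans (hδ₁ z hz) (by norm_num)
  have hφd' : ∀ z (hz : z ∈ ball x₀ δ₁), HasFDerivAt φ
      ((ContinuousLinearEquiv.ofUnit (Units.oneSub (A z - T) (hunit z hz)) : E ≃L[ℝ] E)
        : E →L[ℝ] E) z := by
    intro z hz
    have h := hφd z (hballU (mem_ball.mpr (lt_of_lt_of_le (mem_ball.mp hz) hδ₁le)))
    convert h using 1
    rfl
  have hx₀δ₁ : x₀ ∈ ball x₀ δ₁ := mem_ball_self hδ₁pos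
  have hφca : ContDiffAt ℝ k φ x₀ := hφsm.contDiffAt (hU.mem_nhds hxU)
  set H : OpenPartialHomeomorph E E := hφca.toOpenPartialHomeomorph φ (hφd' x₀ hx₀δ₁) (ne_of_gt (lt_of_lt_of_le zero_lt_one hk')) with hH
  have hHsource : x₀ ∈ H.source := hφca.mem_toOpenPartialHomeomorph_source (hφd' x₀ hx₀δ₁) (ne_of_gt (lt_of_lt_of_le zero_lt_one hk'))
  have hHcoe : (H : E → E) = φ := rfl
  set U' : Set E := ball x₀ δ₂ ∩ H.source with hU'
  have hU'U : ∀ {z : E}, z ∈ U' → z ∈ U := fun hz => hballU (hball₂δ hz.1)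
  refine ⟨U', isOpen_ball.inter H.open_source, ⟨mem_ball_self hδ₂pos, hHsource⟩,
    φ, H.symm, F, hφsm.mono (fun z hz => hU'U hz), ?_, ?_, ?_⟩
  · -- ContDiffOn ψ (φ '' U')
    intro w hw
    obtain ⟨z, hzU', rfl⟩ := hw
    have hzsrc : z ∈ H.source := hzU'.2
    have hsymm : H.symm (φ z) = z := H.left_inv hzsrc
    have hca : ContDiffAt ℝ k (H.symm) (φ z) := by
      apply H.contDiffAt_symm (f₀' := ContinuousLinearEquiv.ofUnit
          (Units.oneSub (A z - T) (hunit z (hball₂₁ hzU'.1)))) (H.map_source hzsrc)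
      · rw [hHcoe, hsymm]
        exact hφd' z (hball₂₁ hzU'.1)
      · rw [hHcoe, hsymm]
        exact hφsm.contDiffAt (hU.mem_nhds (hU'U hzU'))
    exact hca.contDiffWithinAt
  · -- left inverse
    intro y hy
    exact H.left_inv hy.2
  · -- image equality
    apply Set.Subset.antisymm
    · rintro w ⟨y, ⟨hyQ, hyU'⟩, rfl⟩
      have hyU : y ∈ U := hU'U hyU'
      have hPy : P y = y := hfix y hyQ hyU
      refine ⟨⟨y - x₀, ?_⟩, ⟨y, hyU', rfl⟩⟩
      show (A x₀) (y - x₀) = φ y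
      rw [hφdef]
      simp [hPy, hT]
    · rintro w ⟨hwF, z, hzU', rfl⟩
      have hz₁ : z ∈ ball x₀ δ₁ := hball₂₁ hzU'.1
      have hzδ : z ∈ ball x₀ δ := hball₂δ hzU'.1
      have hzU : z ∈ U := hU'U hzU'
      have h1 : T (φ z) = φ z := hFfix _ hwF
      have h2 : T (T (z - x₀)) = T (z - x₀) := DFunLike.congr_fun hA0 (z - x₀)
      have h3 : T (z - P z) = z - P z := by
        have := h1
        rw [hφdef] at this
        simp only [map_add, h2] at this
        -- this : T (z - x₀) + T (z - P z) = T (z - x₀) + (z - P z)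
        exact add_left_cancel this
      have hmemF : z - P z ∈ F := ⟨z - P z, h3⟩
      have h4 : A z (z - P z) = 0 := hker z hzδ
      have h5 : z - P z = 0 := hinj z hz₁ _ hmemF h4
      have hPz : P z = z := by
        have := sub_eq_zero.mp h5
        exact this.symm
      have hzQ : z ∈ Q := by rw [← hPz]; exact (hP z hzU).1
      exact ⟨z, ⟨hzQ, hzU'⟩, rfl⟩
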